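/- Let C : ℤ^d × ℤ^d → [0,∞) satisfy (A1), (A2) and (A3). Then there exist c > 0 depending only on N₀ and κ₂, and Θ₂ ≥ 1 depending only on κ₁, κ₂, N₀, d and α, such that for every ρ > 0, every λ > 0 and every f : ρ^{-1}ℤ^d → ℝ, one has ℰ_α^{ρ,λ}(f,f) ≤ c·ℰ^{ρ,λΘ₂}(f,f); in particular ℰ_α^{ρ}(f,f) ≤ c·ℰ^{ρ}(f,f). -/

import Mathlib

open scoped ENNReal Classical

/-- Euclidean norm of a point of `ℤ^d`. -/
noncomputable def zNorm (d : ℕ) (v : Fin d → ℤ) : ℝ := Real.sqrt (∑ i, ((v i : ℝ))^2)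

/-- Distance of the lattice points `x/ρ` and `y/ρ` of `ρ⁻¹ℤ^d`. -/
noncomputable def latDist (d : ℕ) (ρ : ℝ) (x y : Fin d → ℤ) : ℝ := zNorm d (x - y) / ρ

/-- The truncated Dirichlet form `ℰ^{ρ,λ}` on the scaled lattice `ρ⁻¹ℤ^d` for a
conductivity `C` on `ℤ^d` (scaled as `C^ρ(x,y) = ρ^{d+α} C(ρx,ρy)`). -/
noncomputable def ECtrunc (d : ℕ) (α ρ lam : ℝ) (C : (Fin d → ℤ) → (Fin d → ℤ) → ℝ)
    (f : (Fin d → ℤ) → ℝ) : ℝ≥0∞ :=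
  (1/2 : ℝ≥0∞) * ∑' p : (Fin d → ℤ) × (Fin d → ℤ),
    if latDist d ρ p.1 p.2 ≤ lam then
      ENNReal.ofReal ((f p.1 - f p.2) ^ 2 * (ρ ^ ((d:ℝ) + α) * C p.1 p.2) * ρ ^ (-2*(d:ℝ)))
    else 0

/-- The full Dirichlet form `ℰ^ρ`. -/
noncomputable def ECfull (d : ℕ) (α ρ : ℝ) (C : (Fin d → ℤ) → (Fin d → ℤ) → ℝ)
    (f : (Fin d → ℤ) → ℝ) : ℝ≥0∞ :=
  (1/2 : ℝ≥0∞) * ∑' p : (Fin d → ℤ) × (Fin d → ℤ),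
    ENNReal.ofReal ((f p.1 - f p.2) ^ 2 * (ρ ^ ((d:ℝ) + α) * C p.1 p.2) * ρ ^ (-2*(d:ℝ)))

/-- The truncated α-stable Dirichlet form `ℰ_α^{ρ,λ}` on the scaled lattice. -/
noncomputable def EAtrunc (d : ℕ) (α ρ lam : ℝ) (f : (Fin d → ℤ) → ℝ) : ℝ≥0∞ :=
  (1/2 : ℝ≥0∞) * ∑' p : (Fin d → ℤ) × (Fin d → ℤ),
    if 0 < latDist d ρ p.1 p.2 ∧ latDist d ρ p.1 p.2 ≤ lam then
      ENNReal.ofReal ((f p.1 - f p.2) ^ 2 * latDist d ρ p.1 p.2 ^ (-((d:ℝ) + α))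
        * ρ ^ (-2*(d:ℝ)))
    else 0

/-- The full α-stable Dirichlet form `ℰ_α^ρ` on the scaled lattice. -/
noncomputable def EAfull (d : ℕ) (α ρ : ℝ) (f : (Fin d → ℤ) → ℝ) : ℝ≥0∞ :=
  (1/2 : ℝ≥0∞) * ∑' p : (Fin d → ℤ) × (Fin d → ℤ),
    if 0 < latDist d ρ p.1 p.2 then
      ENNReal.ofReal ((f p.1 - f p.2) ^ 2 * latDist d ρ p.1 p.2 ^ (-((d:ℝ) + α))
        * ρ ^ (-2*(d:ℝ)))
    else 0

lemma zNorm_nonneg (d : ℕ) (v : Fin d → ℤ) : 0 ≤ zNorm d v := Real.sqrt_nonneg _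

lemma zNorm_pos {d : ℕ} {v : Fin d → ℤ} (hv : v ≠ 0) : 0 < zNorm d v := by
  unfold zNorm
  apply Real.sqrt_pos.2
  have h : ∃ i, v i ≠ 0 := by
    by_contra h; push_neg at h; exact hv (funext h)
  obtain ⟨i, hi⟩ := h
  have h2 : (0:ℝ) < ((v i : ℝ))^2 := by positivity
  exact lt_of_lt_of_le h2 (Finset.single_le_sum (f := fun j => ((v j : ℝ))^2)
    (fun j _ => by positivity) (Finset.mem_univ i))

lemma aux_count {A β : Type*} (G : A → ℝ≥0∞) (F : β → ℝ≥0∞) (Φ : A → β) (N : ℕ)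
    (hGF : ∀ a, G a ≤ F (Φ a))
    (h : ∀ b : β, ∃ t : Finset A, (∀ a, Φ a = b → G a ≠ 0 → a ∈ t) ∧ t.card ≤ N) :
    ∑' a, G a ≤ (N : ℝ≥0∞) * ∑' b, F b := by
  classical
  rw [ENNReal.tsum_eq_iSup_sum]
  refine iSup_le fun s => ?_
  set s' := s.filter (fun a => G a ≠ 0) with hs'
  have h4 : ∀ b ∈ s'.image Φ, ((s'.filter fun a => Φ a = b).card) • F b ≤ (N : ℝ≥0∞) * F b := by
    intro b _
    obtain ⟨t, ht, htc⟩ := h b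
    have hsub : (s'.filter fun a => Φ a = b) ⊆ t := by
      intro a ha
      simp only [hs', Finset.mem_filter] at ha
      exact ht a ha.2 ha.1.2
    have := (Finset.card_le_card hsub).trans htc
    rw [nsmul_eq_mul]
    exact mul_le_mul_left (by exact_mod_cast Nat.cast_le.mpr this) _
  calc ∑ a ∈ s, G a = ∑ a ∈ s', G a := (Finset.sum_filter_ne_zero s).symm
    _ ≤ ∑ a ∈ s', F (Φ a) := Finset.sum_le_sum fun a _ => hGF a
    _ = ∑ b ∈ s'.image Φ, ((s'.filter fun a => Φ a = b).card) • F b := Finset.sum_comp F Φ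
    _ ≤ ∑ b ∈ s'.image Φ, (N : ℝ≥0∞) * F b := Finset.sum_le_sum h4
    _ = (N : ℝ≥0∞) * ∑ b ∈ s'.image Φ, F b := (Finset.mul_sum _ _ _).symm
    _ ≤ (N : ℝ≥0∞) * ∑' b, F b := mul_le_mul_right (ENNReal.sum_le_tsum _) _

lemma key_lemma {d : ℕ} {α κ₂ : ℝ} (hκ₂ : 0 < κ₂) (N₀ : ℕ)
    (C : (Fin d → ℤ) → (Fin d → ℤ) → ℝ) (hC0 : ∀ x y, 0 ≤ C x y)
    (l : (Fin d → ℤ) → (Fin d → ℤ) → ℕ)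
    (z : (Fin d → ℤ) → (Fin d → ℤ) → ℕ → (Fin d → ℤ))
    (hA3 : ∀ x y, x ≠ y → l x y ≤ N₀ ∧ z x y 0 = x ∧ z x y (l x y) = y ∧
      ∀ i < l x y, κ₂ * zNorm d (x - y) ^ (-((d:ℝ) + α)) ≤ C (z x y i) (z x y (i+1)))
    (hcount : ∀ ζ ξ : Fin d → ℤ,
      {p : (Fin d → ℤ) × (Fin d → ℤ) | p.1 ≠ p.2 ∧
        ∃ k < l p.1 p.2, z p.1 p.2 k = ζ ∧ z p.1 p.2 (k+1) = ξ}.Finite ∧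
      {p : (Fin d → ℤ) × (Fin d → ℤ) | p.1 ≠ p.2 ∧
        ∃ k < l p.1 p.2, z p.1 p.2 k = ζ ∧ z p.1 p.2 (k+1) = ξ}.ncard ≤ N₀)
    (f : (Fin d → ℤ) → ℝ)
    (QA QC : (Fin d → ℤ) × (Fin d → ℤ) → Prop)
    (hQ : ∀ p : (Fin d → ℤ) × (Fin d → ℤ), p.1 ≠ p.2 → QA p →
      ∀ i < l p.1 p.2, QC (z p.1 p.2 i, z p.1 p.2 (i+1))) :
    ∑' p : (Fin d → ℤ) × (Fin d → ℤ),
      (if p.1 ≠ p.2 ∧ QA p then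
        ENNReal.ofReal ((f p.1 - f p.2)^2 * zNorm d (p.1 - p.2) ^ (-((d:ℝ)+α))) else 0)
    ≤ ENNReal.ofReal ((N₀:ℝ)^3 / κ₂) * ∑' p : (Fin d → ℤ) × (Fin d → ℤ),
        (if QC p then ENNReal.ofReal ((f p.1 - f p.2)^2 * C p.1 p.2) else 0) := by
  classical
  set F : (Fin d → ℤ) × (Fin d → ℤ) → ℝ≥0∞ := fun q =>
    if QC q then ENNReal.ofReal ((f q.1 - f q.2)^2 * C q.1 q.2) else 0 with hF
  set G : ((Fin d → ℤ) × (Fin d → ℤ)) × ℕ → ℝ≥0∞ := fun a =>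
    if a.1.1 ≠ a.1.2 ∧ QA a.1 ∧ a.2 < l a.1.1 a.1.2 then
      F (z a.1.1 a.1.2 a.2, z a.1.1 a.1.2 (a.2+1)) else 0 with hG
  set Φ : ((Fin d → ℤ) × (Fin d → ℤ)) × ℕ → (Fin d → ℤ) × (Fin d → ℤ) := fun a =>
    (z a.1.1 a.1.2 a.2, z a.1.1 a.1.2 (a.2+1)) with hΦ
  -- Step A : pointwise bound
  have stepA : ∀ p : (Fin d → ℤ) × (Fin d → ℤ),
      (if p.1 ≠ p.2 ∧ QA p then
        ENNReal.ofReal ((f p.1 - f p.2)^2 * zNorm d (p.1 - p.2) ^ (-((d:ℝ)+α))) else 0)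
      ≤ ENNReal.ofReal ((N₀:ℝ)/κ₂) * ∑' i : ℕ, G (p, i) := by
    intro p
    by_cases hp : p.1 ≠ p.2 ∧ QA p
    swap
    · simp [hp]
    rw [if_pos hp]
    obtain ⟨hxy, hqa⟩ := hp
    obtain ⟨hl, hz0, hzl, hCb⟩ := hA3 p.1 p.2 hxy
    set n : ℝ := zNorm d (p.1 - p.2) with hn
    set Δ : ℕ → ℝ := fun i => f (z p.1 p.2 i) - f (z p.1 p.2 (i+1)) with hΔ
    have hns : 0 ≤ n ^ (-((d:ℝ)+α)) := Real.rpow_nonneg (zNorm_nonneg d _) _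
    have hreal : (f p.1 - f p.2)^2 * n ^ (-((d:ℝ)+α))
        ≤ ((N₀:ℝ)/κ₂) * ∑ i ∈ Finset.range (l p.1 p.2),
            Δ i ^ 2 * C (z p.1 p.2 i) (z p.1 p.2 (i+1)) := by
      have htel : f p.1 - f p.2 = ∑ i ∈ Finset.range (l p.1 p.2), Δ i := by
        rw [hΔ, Finset.sum_range_sub' (fun i => f (z p.1 p.2 i)), hz0, hzl]
      have hsq : (f p.1 - f p.2)^2
          ≤ (l p.1 p.2 : ℝ) * ∑ i ∈ Finset.range (l p.1 p.2), Δ i ^ 2 := by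
        rw [htel]
        have h := sq_sum_le_card_mul_sum_sq (s := Finset.range (l p.1 p.2)) (f := Δ)
        simpa using h
      calc (f p.1 - f p.2)^2 * n ^ (-((d:ℝ)+α))
          ≤ ((l p.1 p.2 : ℝ) * ∑ i ∈ Finset.range (l p.1 p.2), Δ i ^ 2) * n ^ (-((d:ℝ)+α)) :=
            mul_le_mul_of_nonneg_right hsq hns
        _ = (l p.1 p.2 : ℝ) * ∑ i ∈ Finset.range (l p.1 p.2), Δ i ^ 2 * n ^ (-((d:ℝ)+α)) := by
            rw [mul_assoc, Finset.sum_mul]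
        _ ≤ (N₀ : ℝ) * ∑ i ∈ Finset.range (l p.1 p.2),
              Δ i ^ 2 * (C (z p.1 p.2 i) (z p.1 p.2 (i+1)) / κ₂) := by
            apply mul_le_mul (by exact_mod_cast hl)
            · apply Finset.sum_le_sum
              intro i hi
              apply mul_le_mul_of_nonneg_left _ (sq_nonneg _)
              rw [le_div_iff₀ hκ₂]
              calc n ^ (-((d:ℝ)+α)) * κ₂ = κ₂ * n ^ (-((d:ℝ)+α)) := mul_comm _ _
                _ ≤ C (z p.1 p.2 i) (z p.1 p.2 (i+1)) := hCb i (Finset.mem_range.1 hi)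
            · apply Finset.sum_nonneg; intro i _; positivity
            · positivity
        _ = ((N₀:ℝ)/κ₂) * ∑ i ∈ Finset.range (l p.1 p.2),
              Δ i ^ 2 * C (z p.1 p.2 i) (z p.1 p.2 (i+1)) := by
            rw [Finset.mul_sum, Finset.mul_sum]
            refine Finset.sum_congr rfl fun i _ => ?_
            field_simp
    have h2 : ENNReal.ofReal ((f p.1 - f p.2)^2 * n ^ (-((d:ℝ)+α)))
        ≤ ENNReal.ofReal ((N₀:ℝ)/κ₂) *
          ENNReal.ofReal (∑ i ∈ Finset.range (l p.1 p.2),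
            Δ i ^ 2 * C (z p.1 p.2 i) (z p.1 p.2 (i+1))) := by
      rw [← ENNReal.ofReal_mul (by positivity)]
      exact ENNReal.ofReal_le_ofReal hreal
    refine h2.trans (mul_le_mul_right ?_ _)
    have h3 : ENNReal.ofReal (∑ i ∈ Finset.range (l p.1 p.2),
          Δ i ^ 2 * C (z p.1 p.2 i) (z p.1 p.2 (i+1)))
        ≤ ∑ i ∈ Finset.range (l p.1 p.2), G (p, i) := by
      rw [ENNReal.ofReal_sum_of_nonneg (fun i _ => by
        have := hC0 (z p.1 p.2 i) (z p.1 p.2 (i+1)); positivity)]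
      refine Finset.sum_le_sum fun i hi => ?_
      have hil : i < l p.1 p.2 := Finset.mem_range.1 hi
      have hqc : QC (z p.1 p.2 i, z p.1 p.2 (i+1)) := hQ p hxy hqa i hil
      refine le_of_eq ?_
      simp only [hG, hF, hΔ]
      simp [hxy, hqa, hil, hqc]
    exact h3.trans (ENNReal.sum_le_tsum _)
  -- Step B+C : sum over pairs and double counting
  calc ∑' p : (Fin d → ℤ) × (Fin d → ℤ),
      (if p.1 ≠ p.2 ∧ QA p then
        ENNReal.ofReal ((f p.1 - f p.2)^2 * zNorm d (p.1 - p.2) ^ (-((d:ℝ)+α))) else 0)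
      ≤ ∑' p : (Fin d → ℤ) × (Fin d → ℤ), ENNReal.ofReal ((N₀:ℝ)/κ₂) * ∑' i : ℕ, G (p, i) :=
        ENNReal.tsum_le_tsum stepA
    _ = ENNReal.ofReal ((N₀:ℝ)/κ₂) * ∑' p : (Fin d → ℤ) × (Fin d → ℤ), ∑' i : ℕ, G (p, i) :=
        ENNReal.tsum_mul_left
    _ = ENNReal.ofReal ((N₀:ℝ)/κ₂) * ∑' a : ((Fin d → ℤ) × (Fin d → ℤ)) × ℕ, G a := by
        congr 1
        exact (ENNReal.tsum_prod' (f := G)).symm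
    _ ≤ ENNReal.ofReal ((N₀:ℝ)/κ₂) * (((N₀*N₀ : ℕ) : ℝ≥0∞) * ∑' q, F q) := by
        refine mul_le_mul_right (aux_count G F Φ (N₀*N₀) (fun a => ?_) (fun b => ?_)) _
        · rw [hG]
          dsimp only
          split_ifs with hcond
          · rw [hΦ]
          · exact zero_le
        · refine ⟨((hcount b.1 b.2).1.toFinset) ×ˢ Finset.range N₀, fun a hΦa hGa => ?_, ?_⟩
          · have hcond : a.1.1 ≠ a.1.2 ∧ QA a.1 ∧ a.2 < l a.1.1 a.1.2 := by
              by_contra hc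
              rw [hG] at hGa
              simp only [hc, if_false] at hGa
              exact hGa rfl
            rw [Finset.mem_product]
            constructor
            · rw [Set.Finite.mem_toFinset]
              refine ⟨hcond.1, a.2, hcond.2.2, ?_, ?_⟩
              · rw [← hΦa, hΦ]
              · rw [← hΦa, hΦ]
            · rw [Finset.mem_range]
              exact lt_of_lt_of_le hcond.2.2 (hA3 a.1.1 a.1.2 hcond.1).1
          · rw [Finset.card_product, Finset.card_range]
            have := (hcount b.1 b.2).2
            rw [Set.ncard_eq_toFinset_card _ (hcount b.1 b.2).1] at this
            exact Nat.mul_le_mul_right N₀ this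
    _ = ENNReal.ofReal ((N₀:ℝ)^3 / κ₂) * ∑' q, F q := by
        rw [← mul_assoc]
        congr 1
        have hc : ((N₀*N₀ : ℕ) : ℝ≥0∞) = ENNReal.ofReal ((N₀:ℝ) * (N₀:ℝ)) := by
          rw [← ENNReal.ofReal_natCast]
          push_cast
          ring_nf
        rw [hc, ← ENNReal.ofReal_mul (by positivity)]
        congr 1
        field_simp

lemma edge_bound {d : ℕ} {α κ₂ κ₁ : ℝ} (hκ₂ : 0 < κ₂) (hκ₁ : 0 < κ₁) (hspos : 0 < (d:ℝ) + α)
    {C : (Fin d → ℤ) → (Fin d → ℤ) → ℝ}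
    (hCxx : ∀ x, C x x = 0)
    (hA2 : ∀ x y, x ≠ y → C x y ≤ κ₁ * zNorm d (x - y) ^ (-((d:ℝ) + α)))
    {l : (Fin d → ℤ) → (Fin d → ℤ) → ℕ} {N₀ : ℕ}
    {z : (Fin d → ℤ) → (Fin d → ℤ) → ℕ → (Fin d → ℤ)}
    (hA3 : ∀ x y, x ≠ y → l x y ≤ N₀ ∧ z x y 0 = x ∧ z x y (l x y) = y ∧
      ∀ i < l x y, κ₂ * zNorm d (x - y) ^ (-((d:ℝ) + α)) ≤ C (z x y i) (z x y (i+1))) :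
    ∀ x y : Fin d → ℤ, x ≠ y → ∀ i < l x y,
    zNorm d (z x y i - z x y (i+1)) ≤ ((κ₁/κ₂) ^ (1/((d:ℝ)+α))) * zNorm d (x - y) := by
  intro x y hxy i hi
  have hn : 0 < zNorm d (x - y) := zNorm_pos (sub_ne_zero.2 hxy)
  have hCb := (hA3 x y hxy).2.2.2 i hi
  have hzne : z x y i ≠ z x y (i+1) := by
    intro he
    rw [he, hCxx] at hCb
    have h0 : 0 < κ₂ * zNorm d (x - y) ^ (-((d:ℝ)+α)) :=
      mul_pos hκ₂ (Real.rpow_pos_of_pos hn _)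
    linarith
  have hm : 0 < zNorm d (z x y i - z x y (i+1)) := zNorm_pos (sub_ne_zero.2 hzne)
  set n := zNorm d (x - y) with hnn
  set m := zNorm d (z x y i - z x y (i+1)) with hmm
  have h1 : κ₂ * n ^ (-((d:ℝ)+α)) ≤ κ₁ * m ^ (-((d:ℝ)+α)) := hCb.trans (hA2 _ _ hzne)
  have hns : 0 < n ^ ((d:ℝ)+α) := Real.rpow_pos_of_pos hn _
  have hms : 0 < m ^ ((d:ℝ)+α) := Real.rpow_pos_of_pos hm _
  have h2 : κ₂ * m ^ ((d:ℝ)+α) ≤ κ₁ * n ^ ((d:ℝ)+α) := by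
    rw [Real.rpow_neg hn.le, Real.rpow_neg hm.le, ← div_eq_mul_inv, ← div_eq_mul_inv,
      div_le_div_iff₀ hns hms] at h1
    linarith
  have h3 : m ^ ((d:ℝ)+α) ≤ (κ₁/κ₂) * n ^ ((d:ℝ)+α) := by
    rw [div_mul_eq_mul_div, le_div_iff₀ hκ₂]
    linarith
  have hs0 : (d:ℝ)+α ≠ 0 := ne_of_gt hspos
  calc m = (m ^ ((d:ℝ)+α)) ^ (1/((d:ℝ)+α)) := by
        rw [← Real.rpow_mul hm.le, mul_one_div_cancel hs0, Real.rpow_one]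
    _ ≤ ((κ₁/κ₂) * n ^ ((d:ℝ)+α)) ^ (1/((d:ℝ)+α)) :=
        Real.rpow_le_rpow hms.le h3 (by positivity)
    _ = (κ₁/κ₂) ^ (1/((d:ℝ)+α)) * (n ^ ((d:ℝ)+α)) ^ (1/((d:ℝ)+α)) :=
        Real.mul_rpow (by positivity) hns.le
    _ = (κ₁/κ₂) ^ (1/((d:ℝ)+α)) * n := by
        rw [← Real.rpow_mul hn.le, mul_one_div_cancel hs0, Real.rpow_one]

set_option maxHeartbeats 2000000 in
theorem stmt3 (κ₂ : ℝ) (hκ₂ : 0 < κ₂) (N₀ : ℕ) :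
    -- c depends only on N₀ and κ₂
    ∃ c > (0:ℝ),
      ∀ (d : ℕ), 1 ≤ d → ∀ (α : ℝ), α ∈ Set.Ioo (0:ℝ) 2 → ∀ (κ₁ : ℝ), 0 < κ₁ →
      -- Θ₂ depends only on κ₁, κ₂, N₀, d and α
      ∃ Θ₂ : ℝ, 1 ≤ Θ₂ ∧
        ∀ (C : (Fin d → ℤ) → (Fin d → ℤ) → ℝ),
          (∀ x y, 0 ≤ C x y) →
          -- (A1)
          (∀ x y, C x y = C y x) → (∀ x, C x x = 0) →
          -- (A2)
          (∀ x y, x ≠ y → C x y ≤ κ₁ * zNorm d (x - y) ^ (-((d:ℝ) + α))) →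
          -- (A3)
          ∀ (l : (Fin d → ℤ) → (Fin d → ℤ) → ℕ)
            (z : (Fin d → ℤ) → (Fin d → ℤ) → ℕ → (Fin d → ℤ)),
            (∀ x y, x ≠ y → l x y ≤ N₀ ∧ z x y 0 = x ∧ z x y (l x y) = y ∧
              ∀ i < l x y,
                κ₂ * zNorm d (x - y) ^ (-((d:ℝ) + α)) ≤ C (z x y i) (z x y (i+1))) →
            (∀ ζ ξ : Fin d → ℤ,
              {p : (Fin d → ℤ) × (Fin d → ℤ) | p.1 ≠ p.2 ∧
                ∃ k < l p.1 p.2, z p.1 p.2 k = ζ ∧ z p.1 p.2 (k+1) = ξ}.Finite ∧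
              {p : (Fin d → ℤ) × (Fin d → ℤ) | p.1 ≠ p.2 ∧
                ∃ k < l p.1 p.2, z p.1 p.2 k = ζ ∧ z p.1 p.2 (k+1) = ξ}.ncard ≤ N₀) →
            -- conclusion
            ∀ (ρ : ℝ), 0 < ρ → ∀ (lam : ℝ), 0 < lam → ∀ f : (Fin d → ℤ) → ℝ,
              EAtrunc d α ρ lam f ≤ ENNReal.ofReal c * ECtrunc d α ρ (lam * Θ₂) C f ∧
              EAfull d α ρ f ≤ ENNReal.ofReal c * ECfull d α ρ C f := by
  classical
  refine ⟨((N₀:ℝ)^3 + 1) / κ₂, by positivity, ?_⟩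
  intro d hd α hα κ₁ hκ₁
  have hspos : 0 < (d:ℝ) + α := by
    have h1 : (0:ℝ) ≤ (d:ℝ) := Nat.cast_nonneg d
    have h2 := hα.1
    linarith
  set θ : ℝ := (κ₁/κ₂) ^ (1/((d:ℝ) + α)) with hθ
  have hθ0 : 0 ≤ θ := Real.rpow_nonneg (by positivity) _
  refine ⟨max 1 θ, le_max_left _ _, ?_⟩
  intro C hC0 hCsymm hCxx hA2 l z hA3 hcount ρ hρ lam hlam f
  set Θ₂ : ℝ := max 1 θ with hΘ₂
  have hconst : (N₀:ℝ)^3 / κ₂ ≤ ((N₀:ℝ)^3 + 1) / κ₂ := by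
    exact (div_le_div_iff_of_pos_right hκ₂).2 (by linarith)
  -- distance positivity
  have hdist_iff : ∀ x y : Fin d → ℤ, 0 < latDist d ρ x y ↔ x ≠ y := by
    intro x y
    constructor
    · intro h hxy
      rw [latDist, hxy] at h
      simp only [sub_self] at h
      have hz : zNorm d 0 = 0 := by simp [zNorm]
      rw [hz, zero_div] at h
      exact lt_irrefl 0 h
    · intro h
      exact div_pos (zNorm_pos (sub_ne_zero.2 h)) hρ
  set rfac : ℝ≥0∞ := ENNReal.ofReal (ρ ^ ((d:ℝ)+α) * ρ ^ (-2*(d:ℝ))) with hrfac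
  have hsplitA : ∀ x y : Fin d → ℤ, x ≠ y →
      ENNReal.ofReal ((f x - f y)^2 * latDist d ρ x y ^ (-((d:ℝ)+α)) * ρ ^ (-2*(d:ℝ)))
      = ENNReal.ofReal ((f x - f y)^2 * zNorm d (x-y) ^ (-((d:ℝ)+α))) * rfac := by
    intro x y hxy
    rw [hrfac, ← ENNReal.ofReal_mul
      (mul_nonneg (sq_nonneg _) (Real.rpow_nonneg (zNorm_nonneg d _) _))]
    congr 1
    rw [latDist, Real.div_rpow (zNorm_nonneg d _) hρ.le, Real.rpow_neg hρ.le, div_eq_mul_inv, inv_inv]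
    ring
  have hsplitC : ∀ x y : Fin d → ℤ,
      ENNReal.ofReal ((f x - f y)^2 * (ρ ^ ((d:ℝ)+α) * C x y) * ρ ^ (-2*(d:ℝ)))
      = ENNReal.ofReal ((f x - f y)^2 * C x y) * rfac := by
    intro x y
    rw [hrfac, ← ENNReal.ofReal_mul (mul_nonneg (sq_nonneg _) (hC0 x y))]
    congr 1
    ring
  -- truncated case
  have hQt : ∀ p : (Fin d → ℤ) × (Fin d → ℤ), p.1 ≠ p.2 →
      latDist d ρ p.1 p.2 ≤ lam → ∀ i < l p.1 p.2,
      latDist d ρ (z p.1 p.2 i) (z p.1 p.2 (i+1)) ≤ lam * Θ₂ := by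
    intro p hne hle i hi
    have h1 := edge_bound hκ₂ hκ₁ hspos hCxx hA2 hA3 p.1 p.2 hne i hi
    have hθl : θ ≤ Θ₂ := le_max_right 1 θ
    calc latDist d ρ (z p.1 p.2 i) (z p.1 p.2 (i+1))
        = zNorm d (z p.1 p.2 i - z p.1 p.2 (i+1)) / ρ := rfl
      _ ≤ (θ * zNorm d (p.1 - p.2)) / ρ := by gcongr
      _ = θ * latDist d ρ p.1 p.2 := by rw [latDist, mul_div_assoc]
      _ ≤ θ * lam := mul_le_mul_of_nonneg_left hle hθ0
      _ ≤ Θ₂ * lam := mul_le_mul_of_nonneg_right hθl hlam.le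
      _ = lam * Θ₂ := mul_comm _ _
  have hkeyT := key_lemma hκ₂ N₀ C hC0 l z hA3 hcount f
    (fun p => latDist d ρ p.1 p.2 ≤ lam)
    (fun q => latDist d ρ q.1 q.2 ≤ lam * Θ₂)
    hQt
  have hkeyF := key_lemma hκ₂ N₀ C hC0 l z hA3 hcount f
    (fun _ => True) (fun _ => True) (fun p hne _ i hi => trivial)
  have hkeyF' : (∑' p : (Fin d → ℤ) × (Fin d → ℤ),
      (if p.1 ≠ p.2 ∧ True then
        ENNReal.ofReal ((f p.1 - f p.2)^2 * zNorm d (p.1 - p.2) ^ (-((d:ℝ)+α))) else 0))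
      ≤ ENNReal.ofReal ((N₀:ℝ)^3/κ₂) * ∑' p : (Fin d → ℤ) × (Fin d → ℤ),
        (if True then ENNReal.ofReal ((f p.1 - f p.2)^2 * C p.1 p.2) else 0) := by
    refine le_trans (le_of_eq (tsum_congr fun p => ?_)) (le_trans hkeyF (le_of_eq ?_))
    · simp only [and_true]
    · congr 1
      exact tsum_congr fun p => by simp only [if_true]
  have hEAeqT : EAtrunc d α ρ lam f = (1/2 : ℝ≥0∞) *
      ((∑' p : (Fin d → ℤ) × (Fin d → ℤ),
        (if p.1 ≠ p.2 ∧ latDist d ρ p.1 p.2 ≤ lam then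
          ENNReal.ofReal ((f p.1 - f p.2)^2 * zNorm d (p.1 - p.2) ^ (-((d:ℝ)+α))) else 0))
        * rfac) := by
    rw [EAtrunc, ← ENNReal.tsum_mul_right]
    congr 1
    apply tsum_congr
    intro p
    have hcond : (0 < latDist d ρ p.1 p.2 ∧ latDist d ρ p.1 p.2 ≤ lam)
        ↔ (p.1 ≠ p.2 ∧ latDist d ρ p.1 p.2 ≤ lam) := and_congr_left' (hdist_iff p.1 p.2)
    rw [if_congr hcond rfl rfl]
    split_ifs with h
    · exact hsplitA p.1 p.2 h.1
    · rw [zero_mul]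
  have hECeqT : ECtrunc d α ρ (lam * Θ₂) C f = (1/2 : ℝ≥0∞) *
      ((∑' p : (Fin d → ℤ) × (Fin d → ℤ),
        (if latDist d ρ p.1 p.2 ≤ lam * Θ₂ then
          ENNReal.ofReal ((f p.1 - f p.2)^2 * C p.1 p.2) else 0)) * rfac) := by
    rw [ECtrunc, ← ENNReal.tsum_mul_right]
    congr 1
    apply tsum_congr
    intro p
    split_ifs with h
    · exact hsplitC p.1 p.2
    · rw [zero_mul]
  have hEAeqF : EAfull d α ρ f = (1/2 : ℝ≥0∞) *
      ((∑' p : (Fin d → ℤ) × (Fin d → ℤ),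
        (if p.1 ≠ p.2 ∧ True then
          ENNReal.ofReal ((f p.1 - f p.2)^2 * zNorm d (p.1 - p.2) ^ (-((d:ℝ)+α))) else 0))
        * rfac) := by
    rw [EAfull, ← ENNReal.tsum_mul_right]
    congr 1
    apply tsum_congr
    intro p
    have hcond : (0 < latDist d ρ p.1 p.2) ↔ (p.1 ≠ p.2 ∧ True) := by
      rw [and_true]
      exact hdist_iff p.1 p.2
    rw [if_congr hcond rfl rfl]
    split_ifs with h
    · exact hsplitA p.1 p.2 h.1
    · rw [zero_mul]
  have hECeqF : ECfull d α ρ C f = (1/2 : ℝ≥0∞) *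
      ((∑' p : (Fin d → ℤ) × (Fin d → ℤ),
        (if True then ENNReal.ofReal ((f p.1 - f p.2)^2 * C p.1 p.2) else 0)) * rfac) := by
    rw [ECfull, ← ENNReal.tsum_mul_right]
    congr 1
    apply tsum_congr
    intro p
    rw [if_pos trivial]
    exact hsplitC p.1 p.2
  constructor
  · calc EAtrunc d α ρ lam f
        = (1/2 : ℝ≥0∞) * ((∑' p : (Fin d → ℤ) × (Fin d → ℤ),
          (if p.1 ≠ p.2 ∧ latDist d ρ p.1 p.2 ≤ lam then
            ENNReal.ofReal ((f p.1 - f p.2)^2 * zNorm d (p.1 - p.2) ^ (-((d:ℝ)+α))) else 0))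
          * rfac) := hEAeqT
      _ ≤ (1/2 : ℝ≥0∞) * ((ENNReal.ofReal ((N₀:ℝ)^3/κ₂) *
          ∑' p : (Fin d → ℤ) × (Fin d → ℤ),
            (if latDist d ρ p.1 p.2 ≤ lam * Θ₂ then
              ENNReal.ofReal ((f p.1 - f p.2)^2 * C p.1 p.2) else 0)) * rfac) :=
          mul_le_mul_right (mul_le_mul_left hkeyT rfac) _
      _ = ENNReal.ofReal ((N₀:ℝ)^3/κ₂) * ((1/2 : ℝ≥0∞) *
          ((∑' p : (Fin d → ℤ) × (Fin d → ℤ),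
            (if latDist d ρ p.1 p.2 ≤ lam * Θ₂ then
              ENNReal.ofReal ((f p.1 - f p.2)^2 * C p.1 p.2) else 0)) * rfac)) := by
          rw [mul_assoc]; exact mul_left_comm _ _ _
      _ = ENNReal.ofReal ((N₀:ℝ)^3/κ₂) * ECtrunc d α ρ (lam * Θ₂) C f := by rw [hECeqT]
      _ ≤ ENNReal.ofReal (((N₀:ℝ)^3 + 1)/κ₂) * ECtrunc d α ρ (lam * Θ₂) C f :=
          mul_le_mul_left (ENNReal.ofReal_le_ofReal hconst) _
  · calc EAfull d α ρ f
        = (1/2 : ℝ≥0∞) * ((∑' p : (Fin d → ℤ) × (Fin d → ℤ),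
          (if p.1 ≠ p.2 ∧ True then
            ENNReal.ofReal ((f p.1 - f p.2)^2 * zNorm d (p.1 - p.2) ^ (-((d:ℝ)+α))) else 0))
          * rfac) := hEAeqF
      _ ≤ (1/2 : ℝ≥0∞) * ((ENNReal.ofReal ((N₀:ℝ)^3/κ₂) *
          ∑' p : (Fin d → ℤ) × (Fin d → ℤ),
            (if True then ENNReal.ofReal ((f p.1 - f p.2)^2 * C p.1 p.2) else 0)) * rfac) :=
          mul_le_mul_right (mul_le_mul_left hkeyF' rfac) _
      _ = ENNReal.ofReal ((N₀:ℝ)^3/κ₂) * ((1/2 : ℝ≥0∞) *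
          ((∑' p : (Fin d → ℤ) × (Fin d → ℤ),
            (if True then ENNReal.ofReal ((f p.1 - f p.2)^2 * C p.1 p.2) else 0)) * rfac)) := by
          rw [mul_assoc]; exact mul_left_comm _ _ _
      _ = ENNReal.ofReal ((N₀:ℝ)^3/κ₂) * ECfull d α ρ C f := by rw [hECeqF]
      _ ≤ ENNReal.ofReal (((N₀:ℝ)^3 + 1)/κ₂) * ECfull d α ρ C f :=
          mul_le_mul_left (ENNReal.ofReal_le_ofReal hconst) _
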